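/- The Choi–Lam polynomial CL₂(x₁,x₂,x₃) = −3x₁²x₂²x₃² + x₁²x₃⁴ + x₁⁴x₂² + x₂⁴x₃² satisfies CL₂ = (x₁²x₂ − x₁x₃²)² + (x₂²x₃ − x₁x₂x₃)² + 2x₁x₂(x₂x₃ − x₁x₃)² for all real x₁, x₂, x₃, and hence CL₂ is nonnegative on ℝ³. -/
import Mathlib

theorem choi_lam_two (x₁ x₂ x₃ : ℝ) :
    (-3*x₁^2*x₂^2*x₃^2 + x₁^2*x₃^4 + x₁^4*x₂^2 + x₂^4*x₃^2 =
      (x₁^2*x₂ - x₁*x₃^2)^2 + (x₂^2*x₃ - x₁*x₂*x₃)^2 + 2*x₁*x₂*(x₂*x₃ - x₁*x₃)^2) ∧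
    0 ≤ -3*x₁^2*x₂^2*x₃^2 + x₁^2*x₃^4 + x₁^4*x₂^2 + x₂^4*x₃^2 := by
  constructor
  · ring
  · rcases le_or_gt 0 (x₁*x₂) with h | h
    · nlinarith [sq_nonneg (x₁^2*x₂ - x₁*x₃^2), sq_nonneg (x₂^2*x₃ - x₁*x₂*x₃),
        sq_nonneg (x₂*x₃ - x₁*x₃), mul_nonneg h (sq_nonneg (x₂*x₃ - x₁*x₃))]
    · nlinarith [sq_nonneg (x₁*x₃^2 + x₁^2*x₂), sq_nonneg (x₁*x₂*x₃ + x₂^2*x₃),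
        sq_nonneg (x₁*x₃ + x₂*x₃), mul_nonneg (neg_nonneg.mpr h.le) (sq_nonneg (x₁*x₃ + x₂*x₃))]
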